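/- Let (R, C, M_R, M_C) be a win-lose bimatrix game, and let S_R ⊆ R and S_C ⊆ C be nonempty sets such that: every r ∈ S_R has exactly one c ∈ S_C with M_R(r,c) = 1 and exactly one c ∈ S_C with M_C(r,c) = 1; every c ∈ S_C has exactly one r ∈ S_R with M_C(r,c) = 1 and exactly one r ∈ S_R with M_R(r,c) = 1; every r ∈ R∖S_R has at most one c ∈ S_C with M_R(r,c) = 1; and every c ∈ C∖S_C has at most one r ∈ S_R with M_C(r,c) = 1. Then the pair consisting of the uniform distribution on S_R and the uniform distribution on S_C is a Nash equilibrium of the game. -/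
import Mathlib

open Finset in
/-- `x` is a mixed strategy: a probability distribution on the finite strategy set `S`. -/
def IsMixed {S : Type*} [Fintype S] (x : S → ℝ) : Prop :=
  (∀ s, 0 ≤ x s) ∧ ∑ s, x s = 1

open Finset in
/-- `(x, y)` is a Nash equilibrium of the bimatrix game `(MR, MC)`. -/
def IsNash {R C : Type*} [Fintype R] [Fintype C]
    (MR MC : R → C → ℝ) (x : R → ℝ) (y : C → ℝ) : Prop :=
  IsMixed x ∧ IsMixed y ∧
  (∀ x' : R → ℝ, IsMixed x' →
    ∑ r, ∑ c, x' r * MR r c * y c ≤ ∑ r, ∑ c, x r * MR r c * y c) ∧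
  (∀ y' : C → ℝ, IsMixed y' →
    ∑ r, ∑ c, x r * MC r c * y' c ≤ ∑ r, ∑ c, x r * MC r c * y c)

open Finset in
lemma sum01_le_one {α : Type*} (T : Finset α) (f : α → ℝ)
    (h01 : ∀ a, f a = 0 ∨ f a = 1)
    (huniq : ∀ a ∈ T, ∀ b ∈ T, f a = 1 → f b = 1 → a = b) :
    ∑ t ∈ T, f t ≤ 1 := by
  classical
  have h1 : ∑ t ∈ T, f t = ∑ t ∈ T.filter (fun t => f t = 1), f t := by
    rw [Finset.sum_filter_of_ne]
    intro a _ hne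
    rcases h01 a with h | h
    · exact absurd h hne
    · exact h
  have h2 : ∑ t ∈ T.filter (fun t => f t = 1), f t
      = (T.filter (fun t => f t = 1)).card := by
    rw [Finset.sum_congr rfl (fun a ha => (Finset.mem_filter.mp ha).2)]
    simp
  have h3 : (T.filter (fun t => f t = 1)).card ≤ 1 := by
    apply Finset.card_le_one.mpr
    intro a ha b hb
    obtain ⟨haT, hfa⟩ := Finset.mem_filter.mp ha
    obtain ⟨hbT, hfb⟩ := Finset.mem_filter.mp hb
    exact huniq a haT b hbT hfa hfb
  rw [h1, h2]
  exact_mod_cast h3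

open Finset in
lemma sum01_eq_one {α : Type*} (T : Finset α) (f : α → ℝ)
    (h01 : ∀ a, f a = 0 ∨ f a = 1)
    (hex : ∃! a, a ∈ T ∧ f a = 1) :
    ∑ t ∈ T, f t = 1 := by
  classical
  obtain ⟨a, ⟨haT, hfa⟩, hu⟩ := hex
  rw [Finset.sum_eq_single_of_mem a haT]
  · exact hfa
  · intro b hbT hne
    rcases h01 b with h | h
    · exact h
    · exact absurd (hu b ⟨hbT, h⟩) hne

open Finset in
lemma uniform_sum_one {α : Type*} [Fintype α] (S : Finset α) [DecidableEq α] (h : S.Nonempty) :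
    ∑ a : α, (if a ∈ S then (S.card : ℝ)⁻¹ else 0) = 1 := by
  rw [Finset.sum_ite_mem, Finset.univ_inter, Finset.sum_const, nsmul_eq_mul,
    mul_inv_cancel₀]
  exact_mod_cast (Finset.card_pos.mpr h).ne'

open Finset in
/-- If `S_R`, `S_C` induce an undominated induced directed cycle structure in the
digraph associated to a win-lose bimatrix game, then the pair of uniform
distributions on `S_R` and `S_C` is a Nash equilibrium. -/
theorem uniform_on_undominated_cycle_is_nash
    {R C : Type*} [Fintype R] [Fintype C] [DecidableEq R] [DecidableEq C]
    [Nonempty R] [Nonempty C]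
    (MR MC : R → C → ℝ)
    (h01R : ∀ r c, MR r c = 0 ∨ MR r c = 1)
    (h01C : ∀ r c, MC r c = 0 ∨ MC r c = 1)
    (SR : Finset R) (SC : Finset C) (hSR : SR.Nonempty) (hSC : SC.Nonempty)
    (hrow_out : ∀ r ∈ SR, ∃! c, c ∈ SC ∧ MR r c = 1)
    (hrow_in : ∀ r ∈ SR, ∃! c, c ∈ SC ∧ MC r c = 1)
    (hcol_out : ∀ c ∈ SC, ∃! r, r ∈ SR ∧ MC r c = 1)
    (hcol_in : ∀ c ∈ SC, ∃! r, r ∈ SR ∧ MR r c = 1)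
    (hrow_dom : ∀ r ∉ SR, ∀ c1 ∈ SC, ∀ c2 ∈ SC, MR r c1 = 1 → MR r c2 = 1 → c1 = c2)
    (hcol_dom : ∀ c ∉ SC, ∀ r1 ∈ SR, ∀ r2 ∈ SR, MC r1 c = 1 → MC r2 c = 1 → r1 = r2) :
    IsNash MR MC (fun r => if r ∈ SR then ((SR.card : ℝ))⁻¹ else 0)
      (fun c => if c ∈ SC then ((SC.card : ℝ))⁻¹ else 0) := by
  classical
  have hn : (0:ℝ) < SR.card := by exact_mod_cast Finset.card_pos.mpr hSR
  have hm : (0:ℝ) < SC.card := by exact_mod_cast Finset.card_pos.mpr hSC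
  set n : ℝ := (SR.card : ℝ) with hn_def
  set m : ℝ := (SC.card : ℝ) with hm_def
  -- row sums over SC of MR
  have hRle : ∀ r, ∑ c ∈ SC, MR r c ≤ 1 := by
    intro r
    by_cases hr : r ∈ SR
    · exact le_of_eq (sum01_eq_one SC (MR r) (h01R r) (hrow_out r hr))
    · exact sum01_le_one SC (MR r) (h01R r) (fun a ha b hb h1 h2 => hrow_dom r hr a ha b hb h1 h2)
  have hReq : ∀ r ∈ SR, ∑ c ∈ SC, MR r c = 1 := fun r hr =>
    sum01_eq_one SC (MR r) (h01R r) (hrow_out r hr)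
  -- column sums over SR of MC
  have hCle : ∀ c, ∑ r ∈ SR, MC r c ≤ 1 := by
    intro c
    by_cases hc : c ∈ SC
    · exact le_of_eq (sum01_eq_one SR (fun r => MC r c) (fun r => h01C r c) (hcol_out c hc))
    · exact sum01_le_one SR (fun r => MC r c) (fun r => h01C r c)
        (fun a ha b hb h1 h2 => hcol_dom c hc a ha b hb h1 h2)
  have hCeq : ∀ c ∈ SC, ∑ r ∈ SR, MC r c = 1 := fun c hc =>
    sum01_eq_one SR (fun r => MC r c) (fun r => h01C r c) (hcol_out c hc)
  -- inner sums
  have hinnerR : ∀ (a : ℝ) (r : R),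
      ∑ c, a * MR r c * (if c ∈ SC then m⁻¹ else 0)
        = a * m⁻¹ * ∑ c ∈ SC, MR r c := by
    intro a r
    rw [Finset.mul_sum]
    rw [← Finset.sum_subset (Finset.subset_univ SC)]
    · apply Finset.sum_congr rfl
      intro c hc
      rw [if_pos hc]; ring
    · intro c _ hc
      rw [if_neg hc, mul_zero]
  have hinnerC : ∀ (a : ℝ) (c : C),
      ∑ r, (if r ∈ SR then n⁻¹ else 0) * MC r c * a
        = n⁻¹ * a * ∑ r ∈ SR, MC r c := by
    intro a c
    rw [Finset.mul_sum]
    rw [← Finset.sum_subset (Finset.subset_univ SR)]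
    · apply Finset.sum_congr rfl
      intro r hr
      rw [if_pos hr]; ring
    · intro r _ hr
      rw [if_neg hr, zero_mul, zero_mul]
  have hxmix : IsMixed (fun r => if r ∈ SR then n⁻¹ else 0) := by
    constructor
    · intro r; dsimp only; split
      · positivity
      · exact le_refl 0
    · exact uniform_sum_one SR hSR
  have hymix : IsMixed (fun c => if c ∈ SC then m⁻¹ else 0) := by
    constructor
    · intro c; dsimp only; split
      · positivity
      · exact le_refl 0
    · exact uniform_sum_one SC hSC
  -- the value of the uniform pair for the row player
  have hRval : ∑ r, ∑ c, (if r ∈ SR then n⁻¹ else 0) * MR r c * (if c ∈ SC then m⁻¹ else 0)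
      = m⁻¹ := by
    have : ∀ r, ∑ c, (if r ∈ SR then n⁻¹ else 0) * MR r c * (if c ∈ SC then m⁻¹ else 0)
        = if r ∈ SR then n⁻¹ * m⁻¹ else 0 := by
      intro r
      rw [hinnerR]
      by_cases hr : r ∈ SR
      · rw [if_pos hr, if_pos hr, hReq r hr, mul_one]
      · rw [if_neg hr, if_neg hr, zero_mul, zero_mul]
    rw [Finset.sum_congr rfl (fun r _ => this r)]
    rw [Finset.sum_ite_mem, Finset.univ_inter, Finset.sum_const, nsmul_eq_mul]
    rw [← mul_assoc, mul_inv_cancel₀ hn.ne', one_mul]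
  -- the value of the uniform pair for the column player
  have hCval : ∑ r, ∑ c, (if r ∈ SR then n⁻¹ else 0) * MC r c * (if c ∈ SC then m⁻¹ else 0)
      = n⁻¹ := by
    rw [Finset.sum_comm]
    have : ∀ c, ∑ r, (if r ∈ SR then n⁻¹ else 0) * MC r c * (if c ∈ SC then m⁻¹ else 0)
        = if c ∈ SC then n⁻¹ * m⁻¹ else 0 := by
      intro c
      rw [hinnerC]
      by_cases hc : c ∈ SC
      · rw [if_pos hc, if_pos hc, hCeq c hc, mul_one]
      · rw [if_neg hc, if_neg hc, mul_zero, zero_mul]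
    rw [Finset.sum_congr rfl (fun c _ => this c)]
    rw [Finset.sum_ite_mem, Finset.univ_inter, Finset.sum_const, nsmul_eq_mul]
    rw [mul_comm n⁻¹ m⁻¹, ← mul_assoc, mul_inv_cancel₀ hm.ne', one_mul]
  refine ⟨hxmix, hymix, ?_, ?_⟩
  · intro x' hx'
    rw [hRval]
    calc ∑ r, ∑ c, x' r * MR r c * (if c ∈ SC then m⁻¹ else 0)
        = ∑ r, x' r * m⁻¹ * ∑ c ∈ SC, MR r c := by
          exact Finset.sum_congr rfl (fun r _ => hinnerR (x' r) r)
      _ ≤ ∑ r, x' r * m⁻¹ := by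
          apply Finset.sum_le_sum
          intro r _
          have h1 : 0 ≤ x' r * m⁻¹ := by
            have := hx'.1 r; positivity
          calc x' r * m⁻¹ * ∑ c ∈ SC, MR r c ≤ x' r * m⁻¹ * 1 :=
                mul_le_mul_of_nonneg_left (hRle r) h1
            _ = x' r * m⁻¹ := mul_one _
      _ = m⁻¹ := by rw [← Finset.sum_mul, hx'.2, one_mul]
  · intro y' hy'
    rw [hCval, Finset.sum_comm]
    calc ∑ c, ∑ r, (if r ∈ SR then n⁻¹ else 0) * MC r c * y' c
        = ∑ c, n⁻¹ * y' c * ∑ r ∈ SR, MC r c := by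
          exact Finset.sum_congr rfl (fun c _ => hinnerC (y' c) c)
      _ ≤ ∑ c, n⁻¹ * y' c := by
          apply Finset.sum_le_sum
          intro c _
          have h1 : 0 ≤ n⁻¹ * y' c := by
            have := hy'.1 c; positivity
          calc n⁻¹ * y' c * ∑ r ∈ SR, MC r c ≤ n⁻¹ * y' c * 1 :=
                mul_le_mul_of_nonneg_left (hCle c) h1
            _ = n⁻¹ * y' c := mul_one _
      _ = n⁻¹ := by rw [← Finset.mul_sum, hy'.2, mul_one]
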